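/- Let e ≥ 1 and let j₁, j₂ be integers with j₁ > j₂ ≥ 0 and e − (p−1)(j₁ + j₂) ≥ 0. Let F ∈ k((u)) be a nonzero Laurent series of u-adic order 0, and let f ∈ k((u)) be such that g := u^{e+j₁}·f^p − u^{e+j₁−(p−1)j₂}·f is either zero or has u-adic order ≥ e − (p−1)(j₁ + j₂). Then u^{j₁−p·j₂}·F + g has no nonzero coefficient in negative degrees (i.e. is zero or has u-adic order ≥ 0) if and only if j₁ ≥ p·j₂. -/

import Mathlib

/-- **Simplification of the second valuation condition for Hopf orders in `KC_{p²}`.**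
Let `k` be a field of characteristic `p`, `e ≥ 1`, and `j₁ > j₂ ≥ 0` integers with
`e − (p−1)(j₁+j₂) ≥ 0`.  Let `F ∈ k((u))` be nonzero of `u`-adic order `0`, and let
`f ∈ k((u))` be such that `g = u^{e+j₁}·f^p − u^{e+j₁−(p−1)j₂}·f` is zero or has
`u`-adic order `≥ e − (p−1)(j₁+j₂)`.  Then `u^{j₁−p·j₂}·F + g` has no nonzero coefficient
in negative degrees if and only if `j₁ ≥ p·j₂`. -/
theorem second_valuation_condition_iff
    (p : ℕ) (hp : p.Prime) (k : Type*) [Field k] [CharP k p]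
    (e : ℕ) (he : 1 ≤ e) (j₁ j₂ : ℤ) (hj : j₂ < j₁) (hj₂ : 0 ≤ j₂)
    (hej : 0 ≤ (e : ℤ) - ((p : ℤ) - 1) * (j₁ + j₂))
    (F : LaurentSeries k) (hF : F ≠ 0) (hFord : F.order = 0)
    (f g : LaurentSeries k)
    (hg : g = HahnSeries.single ((e : ℤ) + j₁) (1 : k) * f ^ p -
        HahnSeries.single ((e : ℤ) + j₁ - ((p : ℤ) - 1) * j₂) (1 : k) * f)
    (hgord : g = 0 ∨ (e : ℤ) - ((p : ℤ) - 1) * (j₁ + j₂) ≤ g.order) :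
    ((∀ j : ℤ, j < 0 →
        (HahnSeries.single (j₁ - (p : ℤ) * j₂) (1 : k) * F + g).coeff j = 0) ↔
      (p : ℤ) * j₂ ≤ j₁) := by
  have hgcoeff : ∀ j : ℤ, j < 0 → g.coeff j = 0 := by
    intro j hjneg
    rcases hgord with h0 | hord
    · simp [h0]
    · exact HahnSeries.coeff_eq_zero_of_lt_order (lt_of_lt_of_le (hjneg.trans_le hej) hord)
  have hsc : ∀ b : ℤ,
      (HahnSeries.single (j₁ - (p : ℤ) * j₂) (1 : k) * F).coeff (b + (j₁ - (p : ℤ) * j₂))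
        = F.coeff b := by
    intro b
    rw [HahnSeries.coeff_single_mul_add, one_mul]
  constructor
  · intro H
    by_contra hlt
    push_neg at hlt
    have hneg : j₁ - (p : ℤ) * j₂ < 0 := by linarith
    have hH := H _ hneg
    rw [HahnSeries.coeff_add, hgcoeff _ hneg, add_zero] at hH
    have hc := hsc 0
    rw [zero_add] at hc
    rw [hc] at hH
    have hne : F.coeff F.order ≠ 0 := fun h => hF (HahnSeries.coeff_order_eq_zero.mp h)
    rw [hFord] at hne
    exact hne hH
  · intro hle j hjneg
    rw [HahnSeries.coeff_add, hgcoeff _ hjneg, add_zero]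
    have := hsc (j - (j₁ - (p : ℤ) * j₂))
    rw [sub_add_cancel] at this
    rw [this]
    apply HahnSeries.coeff_eq_zero_of_lt_order
    rw [hFord]
    linarith
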